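/- The Reverse Rejecting (RR) rule is weakly non-bossy: if agent i's priority decreases from instance I to instance I' (both with the same baseline ordering ≻_π) and the RR rule rejects i for I (i ∈ R_I), then for every agent j with i ≻_π j, agent j is rejected for I if and only if j is rejected for I' (i.e., R_I ∩ {j : i ≻_π j} = R_{I'} ∩ {j : i ≻_π j}); equivalently, every agent lower than i in the baseline ordering is matched by the RR rule at I if and only if she is matched at I'. -/

import Mathlib

open scoped Classical

/-- An instance of the rationing problem: a quota for every category and, for every
category `c`, a priority ranking `≿_c`: a total preorder on `N ∪ {∅}`, where we model
`N ∪ {∅}` as `Option N` with `none` playing the role of `∅`. -/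
structure Inst (N C : Type*) where
  quota : C → ℕ
  prio : C → Option N → Option N → Prop
  total : ∀ c x y, prio c x y ∨ prio c y x
  trans : ∀ c x y z, prio c x y → prio c y z → prio c x z

namespace Inst

variable {N C : Type*}

/-- The strict part `≻_c` of the priority ranking `≿_c`. -/
def Strict (I : Inst N C) (c : C) (x y : Option N) : Prop :=
  I.prio c x y ∧ ¬ I.prio c y x

/-- Agent `i` is eligible for category `c` if `i ≻_c ∅`. -/
def Eligible (I : Inst N C) (i : N) (c : C) : Prop :=
  I.Strict c (some i) none

end Inst

variable {N C : Type*} [Fintype N] [DecidableEq N] [DecidableEq C]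

/-- The number of matched agents of (the function) `μ`. -/
def msize (μ : N → Option C) : ℕ :=
  (Finset.univ.filter fun i => μ i ≠ none).card

/-- `μ` satisfies the capacity constraints: every category `c` is matched
to at most `quota c` agents. -/
def Inst.IsMatching (I : Inst N C) (μ : N → Option C) : Prop :=
  ∀ c, (Finset.univ.filter fun i => μ i = some c).card ≤ I.quota c

/-- A baseline ordering `≻_π`, given as a duplicate-free list of all agents,
listed from highest priority to lowest priority; so `i ≻_π j` iff
`order.indexOf i < order.indexOf j`. -/
def IsBaseline (order : List N) : Prop :=
  order.Nodup ∧ ∀ i : N, i ∈ order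

/-- `μ` is a matching of the reduced reservation graph `B_I^{-R}`: it satisfies the
capacity constraints, leaves all agents of `R` unmatched, and uses only edges `{i,c}`
with `i` eligible for `c` and no `j ∈ R` with `j ≻_c i`. -/
def Inst.MatchingOf (I : Inst N C) (R : Finset N) (μ : N → Option C) : Prop :=
  I.IsMatching μ ∧ (∀ i ∈ R, μ i = none) ∧
    ∀ i c, μ i = some c → I.Eligible i c ∧ ∀ j ∈ R, ¬ I.Strict c (some j) (some i)

/-- `ms(B_I^{-R})`: the size of a maximum size matching of the reduced reservation
graph `B_I^{-R}`. -/
noncomputable def Inst.ms (I : Inst N C) (R : Finset N) : ℕ :=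
  sSup {k | ∃ μ : N → Option C, I.MatchingOf R μ ∧ msize μ = k}

/-- The set `R_I` of agents rejected by the Reverse Rejecting (RR) rule: the agents are
considered in order of the baseline ordering from lowest to highest priority (i.e. from the
end of the list `order` to its front), and agent `i` is added to the current rejected set `R`
iff `ms(B_I^{-(R ∪ {i})}) = ms(B_I)`. -/
noncomputable def Inst.rrReject (I : Inst N C) (order : List N) : Finset N :=
  order.foldr
    (fun i R => if I.ms (insert i R) = I.ms (∅ : Finset N) then insert i R else R) ∅

/-- `μ` is a possible output of the RR rule for baseline ordering `order`:
a maximum size matching of the reduced reservation graph `B_I^{-R_I}`. -/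
def Inst.IsRROutcome (I : Inst N C) (order : List N) (μ : N → Option C) : Prop :=
  I.MatchingOf (I.rrReject order) μ ∧ msize μ = I.ms (I.rrReject order)

/-- Agent `i`'s priority decreases from instance `I` to instance `I'`: quotas are unchanged,
the rankings restricted to `(N ∪ {∅}) \ {i}` are unchanged, and `i` only moves down:
for all `x ≠ i`, `x ≿_c i` implies `x ≿'_c i` and `x ≻_c i` implies `x ≻'_c i`. -/
def PrioDecreases (I I' : Inst N C) (i : N) : Prop :=
  I.quota = I'.quota ∧
  (∀ (c : C) (x y : Option N), x ≠ some i → y ≠ some i → (I.prio c x y ↔ I'.prio c x y)) ∧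
  (∀ (c : C) (x : Option N), x ≠ some i → I.prio c x (some i) → I'.prio c x (some i)) ∧
  (∀ (c : C) (x : Option N), x ≠ some i → I.Strict c x (some i) → I'.Strict c x (some i))

-- Auxiliary lemmas
set_option linter.unusedSectionVars false

-- basic ms lemmas
lemma matchingOf_none (I : Inst N C) (R : Finset N) : I.MatchingOf R (fun _ => none) :=
  ⟨fun c => by simp, fun _ _ => rfl, fun i c h => by simp at h⟩

lemma ms_le_ms {I I' : Inst N C} {R R' : Finset N}
    (h : ∀ μ, I.MatchingOf R μ → I'.MatchingOf R' μ) : I.ms R ≤ I'.ms R' := by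
  have hne : {k | ∃ μ : N → Option C, I.MatchingOf R μ ∧ msize μ = k}.Nonempty :=
    ⟨msize (fun _ => (none : Option C)), fun _ => none, matchingOf_none I R, rfl⟩
  apply csSup_le hne
  rintro k ⟨μ, hμ, rfl⟩
  apply le_csSup
  · exact ⟨Fintype.card N, by
      rintro k ⟨ν, _, rfl⟩
      exact (Finset.card_filter_le _ _).trans_eq Finset.card_univ⟩
  · exact ⟨μ, h μ hμ, rfl⟩

lemma ms_mono (I : Inst N C) {R R' : Finset N} (h : R ⊆ R') : I.ms R' ≤ I.ms R := by
  apply ms_le_ms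
  rintro μ ⟨h1, h2, h3⟩
  exact ⟨h1, fun r hr => h2 r (h hr),
    fun a c hac => ⟨(h3 a c hac).1, fun r hr => (h3 a c hac).2 r (h hr)⟩⟩

variable {I I' : Inst N C} {i : N}

lemma strict_iff (hdec : PrioDecreases I I' i) {c : C} {x y : Option N}
    (hx : x ≠ some i) (hy : y ≠ some i) : I.Strict c x y ↔ I'.Strict c x y := by
  unfold Inst.Strict
  rw [hdec.2.1 c x y hx hy, hdec.2.1 c y x hy hx]

lemma strict_i_down (hdec : PrioDecreases I I' i) {c : C} {y : Option N} (hy : y ≠ some i)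
    (h : I'.Strict c (some i) y) : I.Strict c (some i) y := by
  obtain ⟨_, _, hwk, _⟩ := hdec
  refine ⟨?_, fun h2 => h.2 (hwk c y hy h2)⟩
  rcases I.total c (some i) y with h1 | h1
  · exact h1
  · exact absurd (hwk c y hy h1) h.2

lemma eligible_down (hdec : PrioDecreases I I' i) (a : N) (c : C)
    (h : I'.Eligible a c) : I.Eligible a c := by
  by_cases ha : a = i
  · subst ha; exact strict_i_down hdec (by simp) h
  · exact (strict_iff hdec (by simp [ha]) (by simp)).mpr h

lemma matchingOf_down (hdec : PrioDecreases I I' i) {R : Finset N} (hiR : i ∉ R)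
    {μ : N → Option C} (h : I'.MatchingOf R μ) : I.MatchingOf R μ := by
  obtain ⟨h1, h2, h3⟩ := h
  refine ⟨fun c => by rw [hdec.1]; exact h1 c, h2, fun a c hac => ?_⟩
  obtain ⟨hel, hns⟩ := h3 a c hac
  refine ⟨eligible_down hdec a c hel, fun r hr hs => hns r hr ?_⟩
  have hri : (some r : Option N) ≠ some i := by
    simp only [ne_eq, Option.some.injEq]; rintro rfl; exact hiR hr
  by_cases ha : a = i
  · subst ha; exact hdec.2.2.2 c (some r) hri hs
  · exact (strict_iff hdec hri (by simp [ha])).mp hs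

lemma matchingOf_up (hdec : PrioDecreases I I' i) {R : Finset N} (hiR : i ∈ R)
    {μ : N → Option C} (h : I.MatchingOf R μ) : I'.MatchingOf R μ := by
  obtain ⟨h1, h2, h3⟩ := h
  refine ⟨fun c => by rw [← hdec.1]; exact h1 c, h2, fun a c hac => ?_⟩
  obtain ⟨hel, hns⟩ := h3 a c hac
  have hai : a ≠ i := by rintro rfl; rw [h2 a hiR] at hac; cases hac
  refine ⟨(strict_iff hdec (by simp [hai]) (by simp)).mp hel, fun r hr hs => ?_⟩
  by_cases hri : r = i
  · subst hri
    exact hns _ hr (strict_i_down hdec (by simpa using hai) hs)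
  · exact hns r hr ((strict_iff hdec (by simp [hri]) (by simp [hai])).mpr hs)

lemma ms_up (hdec : PrioDecreases I I' i) {R : Finset N} (hiR : i ∈ R) :
    I.ms R ≤ I'.ms R := ms_le_ms (fun _ => matchingOf_up hdec hiR)

lemma ms_down (hdec : PrioDecreases I I' i) {R : Finset N} (hiR : i ∉ R) :
    I'.ms R ≤ I.ms R := ms_le_ms (fun _ => matchingOf_down hdec hiR)

-- fold lemmas
lemma foldr_step_subset (g : N → Finset N → Finset N) (hg : ∀ a R, R ⊆ g a R)
    (S : Finset N) (l : List N) : S ⊆ List.foldr g S l := by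
  induction l with
  | nil => exact subset_rfl
  | cons a l ih => exact ih.trans (hg a _)

lemma mem_foldr_iff (g : N → Finset N → Finset N)
    (hg : ∀ a R, g a R = R ∨ g a R = insert a R) (S : Finset N) {j : N}
    (l : List N) (hj : j ∉ l) : (j ∈ List.foldr g S l ↔ j ∈ S) := by
  induction l with
  | nil => exact Iff.rfl
  | cons a l ih =>
    simp only [List.mem_cons, not_or] at hj
    rcases hg a (List.foldr g S l) with h | h <;>
      simp only [List.foldr_cons, h, Finset.mem_insert]
    · exact ih hj.2
    · rw [or_iff_right hj.1]; exact ih hj.2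

lemma mem_list_of_mem_foldr (g : N → Finset N → Finset N)
    (hg : ∀ a R, g a R = R ∨ g a R = insert a R) (S : Finset N) (l : List N) {j : N}
    (hj : j ∈ List.foldr g S l) : j ∈ l ∨ j ∈ S := by
  by_cases h : j ∈ l
  · exact Or.inl h
  · exact Or.inr ((mem_foldr_iff g hg S l h).mp hj)

/-- The RR rule is weakly non-bossy: if agent `i`'s priority decreases from `I`
to `I'` (same baseline ordering) and the RR rule rejects `i` for `I`, then every agent `j`
with `i ≻_π j` is rejected for `I` iff she is rejected for `I'` (equivalently, matched at `I`
iff matched at `I'`). -/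

theorem rr_weakly_non_bossy (I I' : Inst N C) (i : N) (order : List N)
    (hb : IsBaseline order) (hdec : PrioDecreases I I' i)
    (hrej : i ∈ I.rrReject order) :
    ∀ j : N, order.idxOf i < order.idxOf j →
      (j ∈ I.rrReject order ↔ j ∈ I'.rrReject order) := by
  obtain ⟨hnd, hmem⟩ := hb
  set fI : N → Finset N → Finset N :=
    fun a R => if I.ms (insert a R) = I.ms (∅ : Finset N) then insert a R else R with hfI
  set fI' : N → Finset N → Finset N :=
    fun a R => if I'.ms (insert a R) = I'.ms (∅ : Finset N) then insert a R else R with hfI'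
  have hgI : ∀ (a : N) (R : Finset N), fI a R = R ∨ fI a R = insert a R := by
    intro a R; rw [hfI]; dsimp only; split <;> simp
  have hgI' : ∀ (a : N) (R : Finset N), fI' a R = R ∨ fI' a R = insert a R := by
    intro a R; rw [hfI']; dsimp only; split <;> simp
  have hsI : ∀ (a : N) (R : Finset N), R ⊆ fI a R := by
    intro a R; rcases hgI a R with h | h
    · rw [h]
    · rw [h]; exact Finset.subset_insert a R
  have hrr : I.rrReject order = List.foldr fI ∅ order := rfl
  have hrr' : I'.rrReject order = List.foldr fI' ∅ order := rfl
  -- decomposition of the order around i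
  set k := order.idxOf i with hk
  have hkl : k < order.length := List.idxOf_lt_length_iff.2 (hmem i)
  have hgetk : order[k] = i := List.getElem_idxOf hkl
  set A := order.take k with hA
  set B := order.drop (k + 1) with hB
  have htake : order.take (k + 1) = A ++ [i] := by
    rw [List.take_succ, List.getElem?_eq_getElem hkl, hgetk]; rfl
  have hdecomp : order = A ++ i :: B := by
    conv_lhs => rw [← List.take_append_drop (k + 1) order]
    rw [htake]; simp [hB]
  have hnd' : i ∉ A ∧ i ∉ B := by
    have h := hnd
    rw [hdecomp] at h
    simp [List.nodup_append, List.nodup_cons] at h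
    exact ⟨fun hi => (h.2.2 i hi).1 rfl, h.2.1.1⟩
  -- the status after processing B
  set S0 : Finset N := List.foldr fI ∅ B with hS0
  set S0' : Finset N := List.foldr fI' ∅ B with hS0'
  have hS0B : ∀ j ∈ S0, j ∈ B := by
    intro j hj
    rcases mem_list_of_mem_foldr fI hgI ∅ B hj with h | h
    · exact h
    · simp at h
  have hiS0 : i ∉ S0 := fun h => hnd'.2 (hS0B i h)
  have hfold : I.rrReject order = List.foldr fI (fI i S0) A := by
    rw [hrr, hdecomp, List.foldr_append]; rfl
  have hfold' : I'.rrReject order = List.foldr fI' (fI' i S0') A := by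
    rw [hrr', hdecomp, List.foldr_append]; rfl
  -- from hrej : the condition at i's step holds
  have hcond : I.ms (insert i S0) = I.ms (∅ : Finset N) := by
    by_contra hc
    rw [hfold, mem_foldr_iff fI hgI _ A hnd'.1] at hrej
    rw [hfI] at hrej; dsimp only at hrej; rw [if_neg hc] at hrej
    exact hiS0 hrej
  -- T = T'
  have hfix : ∀ R : Finset N, R ⊆ S0 → I.ms (insert i R) = I.ms (∅ : Finset N) := by
    intro R hR
    have h1 : I.ms (insert i S0) ≤ I.ms (insert i R) :=
      ms_mono I (Finset.insert_subset_insert i hR)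
    have h2 : I.ms (insert i R) ≤ I.ms ∅ := ms_mono I (Finset.empty_subset _)
    omega
  have hTT' : I.ms (∅ : Finset N) = I'.ms (∅ : Finset N) := by
    have h1 : I'.ms (∅ : Finset N) ≤ I.ms (∅ : Finset N) :=
      ms_down hdec (Finset.notMem_empty i)
    have h2 : I.ms (insert i (∅ : Finset N)) = I.ms (∅ : Finset N) :=
      hfix ∅ (Finset.empty_subset _)
    have h3 : I.ms (insert i (∅ : Finset N)) ≤ I'.ms (insert i (∅ : Finset N)) :=
      ms_up hdec (Finset.mem_insert_self i ∅)
    have h4 : I'.ms (insert i (∅ : Finset N)) ≤ I'.ms (∅ : Finset N) :=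
      ms_mono I' (Finset.empty_subset _)
    omega
  -- main induction along suffixes of B
  have key : ∀ l : List N, l <:+ B →
      List.foldr fI ∅ l ⊆ S0 ∧ List.foldr fI ∅ l = List.foldr fI' ∅ l := by
    intro l
    induction l with
    | nil => intro _; exact ⟨Finset.empty_subset _, rfl⟩
    | cons a l ih =>
      intro hsuf
      obtain ⟨hsub, heq⟩ := ih ((List.suffix_cons a l).trans hsuf)
      set R : Finset N := List.foldr fI ∅ l with hR
      have hiR : i ∉ R := fun h => hiS0 (hsub h)
      have haB : a ∈ B := hsuf.subset List.mem_cons_self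
      have hai : a ≠ i := fun h => hnd'.2 (h ▸ haB)
      have hiaR : i ∉ insert a R := by
        simp [Finset.mem_insert, Ne.symm hai, hiR]
      have hsub2 : fI a R ⊆ S0 := by
        obtain ⟨u, hu⟩ := hsuf
        have h := foldr_step_subset fI hsI (List.foldr fI ∅ (a :: l)) u
        rw [← List.foldr_append, hu] at h
        exact h
      have hcondiff : (I.ms (insert a R) = I.ms (∅ : Finset N)) ↔
          (I'.ms (insert a R) = I'.ms (∅ : Finset N)) := by
        constructor
        · intro h
          have hsubaR : insert a R ⊆ S0 := by
            have : fI a R = insert a R := by rw [hfI]; dsimp only; rw [if_pos h]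
            rw [← this]; exact hsub2
          have h1 : I.ms (insert i (insert a R)) = I.ms (∅ : Finset N) :=
            hfix _ hsubaR
          have h2 : I.ms (insert i (insert a R)) ≤ I'.ms (insert i (insert a R)) :=
            ms_up hdec (Finset.mem_insert_self i _)
          have h3 : I'.ms (insert i (insert a R)) ≤ I'.ms (insert a R) :=
            ms_mono I' (Finset.subset_insert i _)
          have h4 : I'.ms (insert a R) ≤ I'.ms (∅ : Finset N) :=
            ms_mono I' (Finset.empty_subset _)
          omega
        · intro h
          have h5 : I'.ms (insert a R) ≤ I.ms (insert a R) := ms_down hdec hiaR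
          have h6 : I.ms (insert a R) ≤ I.ms (∅ : Finset N) :=
            ms_mono I (Finset.empty_subset _)
          omega
      constructor
      · exact hsub2
      · show fI a R = fI' a (List.foldr fI' ∅ l)
        rw [← heq, hfI, hfI']; dsimp only
        by_cases hc : I.ms (insert a R) = I.ms (∅ : Finset N)
        · rw [if_pos hc, if_pos (hcondiff.1 hc)]
        · rw [if_neg hc, if_neg (fun h => hc (hcondiff.2 h))]
  have hS0eq : S0 = S0' := (key B (List.suffix_refl B)).2
  -- conclusion
  intro j hj
  have hji : j ≠ i := by rintro rfl; exact lt_irrefl _ hj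
  have hjA : j ∉ A := by
    intro hjt
    have hjt1 : j ∈ order.take (k + 1) := by rw [htake]; exact List.mem_append_left _ hjt
    have h1 : order.idxOf j = (order.take (k + 1)).idxOf j := by
      conv_lhs => rw [← List.take_append_drop (k + 1) order]
      exact List.idxOf_append_of_mem hjt1
    have h2 : (order.take (k + 1)).idxOf j < (order.take (k + 1)).length :=
      List.idxOf_lt_length_iff.2 hjt1
    have h3 : (order.take (k + 1)).length ≤ k + 1 := by
      rw [List.length_take]; omega
    omega
  rw [hfold, hfold', mem_foldr_iff fI hgI _ A hjA, mem_foldr_iff fI' hgI' _ A hjA]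
  have hmemS : ∀ (g : N → Finset N → Finset N)
      (hg : ∀ a R, g a R = R ∨ g a R = insert a R) (S : Finset N),
      (j ∈ g i S ↔ j ∈ S) := by
    intro g hg S
    rcases hg i S with h | h <;> rw [h]
    simp [Finset.mem_insert, hji]
  rw [hmemS fI hgI S0, hmemS fI' hgI' S0', hS0eq]
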